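/- Let (G,P) and (K,Q) be quasi-lattice ordered groups and let μ : G → K be a controlled map. Then (μ⁻¹(e), μ⁻¹(e) ∩ P) is a quasi-lattice ordered group: μ⁻¹(e) is a subgroup of G, μ⁻¹(e) ∩ P is a submonoid with trivial intersection with its set of inverses, and any two elements of μ⁻¹(e) with a common upper bound in μ⁻¹(e) ∩ P have a least common upper bound lying in μ⁻¹(e) ∩ P. -/
import Mathlib


/-- The left-invariant relation `x ≤ y ↔ x⁻¹ * y ∈ P` associated to a submonoid `P`. -/
def QLO.le {G : Type*} [Group G] (P : Submonoid G) (x y : G) : Prop := x⁻¹ * y ∈ P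

/-- `w` is the least common upper bound of `x` and `y` lying in `P`. -/
def QLO.IsLub {G : Type*} [Group G] (P : Submonoid G) (x y w : G) : Prop :=
  w ∈ P ∧ QLO.le P x w ∧ QLO.le P y w ∧
    ∀ z ∈ P, QLO.le P x z → QLO.le P y z → QLO.le P w z

/-- `(G, P)` is a quasi-lattice ordered group. -/
def QLO.IsQLO {G : Type*} [Group G] (P : Submonoid G) : Prop :=
  (∀ x : G, x ∈ P → x⁻¹ ∈ P → x = 1) ∧
    ∀ x y : G, (∃ z ∈ P, QLO.le P x z ∧ QLO.le P y z) → ∃ w : G, QLO.IsLub P x y w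

/-- `σ` is a minimal element of `μ⁻¹(k) ∩ P`. -/
def QLO.Minimal {G K : Type*} [Group G] [Group K] (P : Submonoid G) (μ : G →* K)
    (k : K) (σ : G) : Prop :=
  μ σ = k ∧ σ ∈ P ∧ ∀ x : G, μ x = k → x ∈ P → QLO.le P x σ → x = σ

theorem stmt1 {G K : Type*} [Group G] [Group K] (P : Submonoid G) (Q : Submonoid K)
    (hP : QLO.IsQLO P) (hQ : QLO.IsQLO Q) (μ : G →* K)
    -- μ is order-preserving
    (hmono : ∀ x y : G, QLO.le P x y → QLO.le Q (μ x) (μ y))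
    -- (1) μ preserves least common upper bounds
    (h1 : ∀ x y w : G, QLO.IsLub P x y w → QLO.IsLub Q (μ x) (μ y) (μ w))
    -- (2) for each k ∈ Q, the set of minimal elements of μ⁻¹(k) ∩ P is complete
    (h2 : ∀ k ∈ Q, ∀ x : G, μ x = k → x ∈ P →
      ∃ σ : G, QLO.Minimal P μ k σ ∧ QLO.le P σ x)
    -- (3) distinct minimal elements of μ⁻¹(k) ∩ P have no common upper bound
    (h3 : ∀ k ∈ Q, ∀ σ τ : G, QLO.Minimal P μ k σ → QLO.Minimal P μ k τ →
      (∃ z ∈ P, QLO.le P σ z ∧ QLO.le P τ z) → σ = τ) :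
    -- μ⁻¹(e) ∩ P is a submonoid:
    ((μ 1 = 1 ∧ (1 : G) ∈ P) ∧
      (∀ x y : G, (μ x = 1 ∧ x ∈ P) → (μ y = 1 ∧ y ∈ P) → (μ (x * y) = 1 ∧ x * y ∈ P))) ∧
    -- with trivial intersection with its set of inverses:
    (∀ x : G, (μ x = 1 ∧ x ∈ P) → (μ x⁻¹ = 1 ∧ x⁻¹ ∈ P) → x = 1) ∧
    -- and (μ⁻¹(e), μ⁻¹(e) ∩ P) is quasi-lattice ordered:
    (∀ x y : G, μ x = 1 → μ y = 1 →
      (∃ z : G, (μ z = 1 ∧ z ∈ P) ∧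
        (μ (x⁻¹ * z) = 1 ∧ x⁻¹ * z ∈ P) ∧ (μ (y⁻¹ * z) = 1 ∧ y⁻¹ * z ∈ P)) →
      ∃ w : G, (μ w = 1 ∧ w ∈ P) ∧
        (μ (x⁻¹ * w) = 1 ∧ x⁻¹ * w ∈ P) ∧ (μ (y⁻¹ * w) = 1 ∧ y⁻¹ * w ∈ P) ∧
        ∀ z : G, (μ z = 1 ∧ z ∈ P) →
          (μ (x⁻¹ * z) = 1 ∧ x⁻¹ * z ∈ P) → (μ (y⁻¹ * z) = 1 ∧ y⁻¹ * z ∈ P) →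
          (μ (w⁻¹ * z) = 1 ∧ w⁻¹ * z ∈ P)) := by
  refine ⟨⟨⟨by simp, P.one_mem⟩, ?_⟩, ?_, ?_⟩
  · rintro x y ⟨hx, hxP⟩ ⟨hy, hyP⟩
    exact ⟨by simp [hx, hy], P.mul_mem hxP hyP⟩
  · rintro x ⟨hx, hxP⟩ ⟨hx', hx'P⟩
    exact hP.1 x hxP hx'P
  · rintro x y hx hy ⟨z, ⟨hz1, hzP⟩, ⟨hxz1, hxzP⟩, ⟨hyz1, hyzP⟩⟩
    obtain ⟨w, hw⟩ := hP.2 x y ⟨z, hzP, hxzP, hyzP⟩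
    have hμ := h1 x y w hw
    have hμw : μ w = 1 := by
      refine hQ.1 _ hμ.1 ?_
      have := hμ.2.2.2 1 Q.one_mem (by simpa [QLO.le, hx] using Q.one_mem) (by simpa [QLO.le, hy] using Q.one_mem)
      simpa [QLO.le] using this
    refine ⟨w, ⟨hμw, hw.1⟩, ⟨by simp [map_mul, hx, hμw], hw.2.1⟩,
      ⟨by simp [map_mul, hy, hμw], hw.2.2.1⟩, ?_⟩
    rintro z' ⟨hz'1, hz'P⟩ ⟨_, hxz'P⟩ ⟨_, hyz'P⟩
    exact ⟨by simp [map_mul, hμw, hz'1], hw.2.2.2 z' hz'P hxz'P hyz'P⟩
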